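/- arXiv:0912.4784 — 2 statements merged into one kernel-verified Lean document; each statement's English description precedes it below -/
import Mathlib

section
/- Let B be a d×d real matrix, ‖·‖ a norm on ℝ^d, and p ∈ [1,∞). Suppose all eigenvalues of B have positive real part (so the integral converges). Define ‖x‖_B = (∫₀¹ ‖s^B x‖^p s^{-1} ds)^{1/p}. Then ‖·‖_B is a norm on ℝ^d. -/
open Matrix Set MeasureTheory
open scoped NNReal ENNReal
set_option maxHeartbeats 1000000

/-- The Jurek–Mason functional `‖x‖_B = (∫₀¹ ‖s^B x‖^p s⁻¹ ds)^{1/p}`. -/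
noncomputable def normB {d : ℕ} (B : Matrix (Fin d) (Fin d) ℝ) (p : ℝ)
    (x : Fin d → ℝ) : ℝ :=
  (∫ s in Ioc (0 : ℝ) 1,
    ‖(NormedSpace.exp ((Real.log s) • B)).mulVec x‖ ^ p / s) ^ (1 / p)

section aux

open Filter

attribute [local instance] Matrix.linftyOpSemiNormedRing Matrix.linftyOpNormedRing
  Matrix.linftyOpNormedAlgebra

variable {d : ℕ}

lemma aux_pow_mulVec (A : Matrix (Fin d) (Fin d) ℂ) (v : Fin d → ℂ) (μ : ℂ)
    (hv : A.mulVec v = μ • v) (n : ℕ) : (A ^ n).mulVec v = μ ^ n • v := by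
  induction n with
  | zero => simp
  | succ n ih =>
    rw [pow_succ', ← Matrix.mulVec_mulVec, ih, Matrix.mulVec_smul, hv, smul_smul, ← pow_succ]

lemma aux_exp_mulVec (A : Matrix (Fin d) (Fin d) ℂ) (v : Fin d → ℂ) (μ : ℂ)
    (hv : A.mulVec v = μ • v) :
    (NormedSpace.exp A).mulVec v = Complex.exp μ • v := by
  classical
  let L : Matrix (Fin d) (Fin d) ℂ →ₗ[ℂ] (Fin d → ℂ) :=
    { toFun := fun M => M.mulVec v
      map_add' := fun M N => Matrix.add_mulVec M N v
      map_smul' := fun c M => Matrix.smul_mulVec c M v }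
  let Lc : Matrix (Fin d) (Fin d) ℂ →L[ℂ] (Fin d → ℂ) := LinearMap.toContinuousLinearMap L
  have hsum : Summable (fun n : ℕ => (n.factorial : ℂ)⁻¹ • A ^ n) := NormedSpace.expSeries_summable' A
  have hsum2 : Summable (fun n : ℕ => (n.factorial : ℂ)⁻¹ * μ ^ n) := by
    simpa [smul_eq_mul] using NormedSpace.expSeries_summable' (𝕂 := ℂ) (𝔸 := ℂ) μ
  have h1 : (NormedSpace.exp A).mulVec v = Lc (NormedSpace.exp A) := rfl
  rw [h1, NormedSpace.exp_eq_tsum ℂ, ContinuousLinearMap.map_tsum Lc hsum]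
  have h2 : ∀ n : ℕ, Lc ((n.factorial : ℂ)⁻¹ • A ^ n) = ((n.factorial : ℂ)⁻¹ * μ ^ n) • v := by
    intro n
    have : Lc (A ^ n) = μ ^ n • v := aux_pow_mulVec A v μ hv n
    rw [_root_.map_smul, this, smul_smul]
  simp_rw [h2]
  rw [hsum2.tsum_smul_const]
  congr 1
  rw [Complex.exp_eq_exp_ℂ, NormedSpace.exp_eq_tsum ℂ]
  simp [smul_eq_mul]

lemma aux_spectrum_exp_neg (A : Matrix (Fin d) (Fin d) ℂ) :
    ∀ lam ∈ spectrum ℂ (NormedSpace.exp (-A)),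
      ∃ μ ∈ spectrum ℂ A, lam = Complex.exp (-μ) := by
  intro lam hlam
  classical
  set T := NormedSpace.exp (-A) with hT
  -- move to endomorphisms
  rw [← AlgEquiv.spectrum_eq (Matrix.toLinAlgEquiv' (R := ℂ) (n := Fin d)) T] at hlam
  have heig : Module.End.HasEigenvalue (Matrix.toLinAlgEquiv' T) lam :=
    Module.End.hasEigenvalue_iff_mem_spectrum.mpr hlam
  set E := Module.End.eigenspace (Matrix.toLinAlgEquiv' T) lam with hE
  have hEne : E ≠ ⊥ := heig
  haveI : Nontrivial E := Submodule.nontrivial_iff_ne_bot.mpr hEne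
  -- A preserves E
  have hcomm : A * T = T * A := by
    have : Commute A T := ((Commute.refl A).neg_right).exp_right
    exact this
  have hmaps : Set.MapsTo (Matrix.toLinAlgEquiv' A) E E := by
    intro w hw
    have hw' : Matrix.toLinAlgEquiv' T w = lam • w := Module.End.mem_eigenspace_iff.mp hw
    refine Module.End.mem_eigenspace_iff.mpr ?_
    have : Matrix.toLinAlgEquiv' T (Matrix.toLinAlgEquiv' A w)
        = Matrix.toLinAlgEquiv' A (Matrix.toLinAlgEquiv' T w) := by
      have h3 := congrArg (fun M => Matrix.toLinAlgEquiv' M w) hcomm.symm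
      simpa [_root_.map_mul] using h3
    rw [this, hw', _root_.map_smul]
  let g : Module.End ℂ E := (Matrix.toLinAlgEquiv' A).restrict hmaps
  obtain ⟨μ, hμ⟩ := Module.End.exists_eigenvalue g
  obtain ⟨v, hgv⟩ := hμ.exists_hasEigenvector
  have hv0 : v ≠ 0 := hgv.2
  have hvA : A.mulVec (v : Fin d → ℂ) = μ • (v : Fin d → ℂ) := by
    have := congrArg (Subtype.val) hgv.apply_eq_smul
    exact this
  have hv0' : (v : Fin d → ℂ) ≠ 0 := fun h => hv0 (Subtype.val_injective h)
  have hμmem : μ ∈ spectrum ℂ A := by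
    rw [← AlgEquiv.spectrum_eq (Matrix.toLinAlgEquiv' (R := ℂ) (n := Fin d)) A]
    refine Module.End.hasEigenvalue_iff_mem_spectrum.mp ?_
    exact Module.End.hasEigenvalue_of_hasEigenvector
      ⟨Module.End.mem_eigenspace_iff.mpr (by simpa [Matrix.toLinAlgEquiv'_apply] using hvA), hv0'⟩
  refine ⟨μ, hμmem, ?_⟩
  have hvT : T.mulVec (v : Fin d → ℂ) = Complex.exp (-μ) • (v : Fin d → ℂ) := by
    refine aux_exp_mulVec (-A) _ _ ?_
    rw [Matrix.neg_mulVec, hvA, ← neg_smul]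
  have hvT' : T.mulVec (v : Fin d → ℂ) = lam • (v : Fin d → ℂ) := by
    have h4 : Matrix.toLinAlgEquiv' T (v : Fin d → ℂ) = lam • (v : Fin d → ℂ) :=
      Module.End.mem_eigenspace_iff.mp v.2
    simpa [Matrix.toLinAlgEquiv'_apply] using h4
  have : (lam - Complex.exp (-μ)) • (v : Fin d → ℂ) = 0 := by
    rw [sub_smul, ← hvT, ← hvT', sub_self]
  rcases smul_eq_zero.mp this with h | h
  · exact (sub_eq_zero.mp h)
  · exact absurd h hv0'




lemma aux_norm_complexify (y : Fin d → ℝ) : ‖(fun i => (y i : ℂ))‖ = ‖y‖ := by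
  rw [Pi.norm_def, Pi.norm_def]
  congr 1
  refine Finset.sup_congr rfl fun i _ => ?_
  simp [Complex.nnnorm_real]

lemma aux_mulVec_complexify (M : Matrix (Fin d) (Fin d) ℝ) (x : Fin d → ℝ) :
    ‖M.mulVec x‖ = ‖(M.map (algebraMap ℝ ℂ)).mulVec (fun i => (x i : ℂ))‖ := by
  have h : (M.map (algebraMap ℝ ℂ)).mulVec (fun i => (x i : ℂ))
      = fun i => ((M.mulVec x i : ℝ) : ℂ) := by
    funext i
    simp only [Matrix.mulVec, dotProduct, Matrix.map_apply]
    push_cast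
    rfl
  rw [h, aux_norm_complexify]

lemma aux_map_exp (M : Matrix (Fin d) (Fin d) ℝ) :
    (NormedSpace.exp M).map (algebraMap ℝ ℂ) = NormedSpace.exp (M.map (algebraMap ℝ ℂ)) := by
  classical
  have hcont : Continuous fun N : Matrix (Fin d) (Fin d) ℝ => N.map (algebraMap ℝ ℂ) := by
    exact continuous_id.matrix_map Complex.continuous_ofReal
  have h1 := NormedSpace.map_exp (RingHom.mapMatrix (algebraMap ℝ ℂ)) hcont M
  have h2 : (RingHom.mapMatrix (algebraMap ℝ ℂ)) (NormedSpace.exp M)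
      = (NormedSpace.exp M).map (algebraMap ℝ ℂ) := rfl
  have h3 : (RingHom.mapMatrix (algebraMap ℝ ℂ)) M = M.map (algebraMap ℝ ℂ) := rfl
  exact h2.symm.trans (h1.trans (congrArg NormedSpace.exp h3))

lemma aux_decay (B : Matrix (Fin d) (Fin d) ℝ)
    (hspec : ∀ μ ∈ spectrum ℂ (B.map (algebraMap ℝ ℂ)), 0 < μ.re) :
    ∃ C > (0:ℝ), ∃ ε > (0:ℝ), ∀ x : Fin d → ℝ, ∀ s ∈ Ioc (0:ℝ) 1,
      ‖(NormedSpace.exp (Real.log s • B)).mulVec x‖ ≤ C * s ^ ε * ‖x‖ := by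
  classical
  set A := B.map (algebraMap ℝ ℂ) with hA
  set T := NormedSpace.exp (-A) with hTdef
  -- spectral radius of T is < 1
  have hfin := Matrix.finite_spectrum T
  set F := hfin.toFinset with hF
  set ρ : ℝ≥0 := F.sup (fun l => ‖l‖₊) with hρdef
  have hρ1 : ρ < 1 := by
    rw [hρdef, Finset.sup_lt_iff (by norm_num : (⊥ : ℝ≥0) < 1)]
    intro lam hlam
    obtain ⟨μ, hμ, rfl⟩ := aux_spectrum_exp_neg A lam (hfin.mem_toFinset.mp hlam)
    have : ‖Complex.exp (-μ)‖ = Real.exp (-μ.re) := by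
      rw [Complex.norm_exp]; simp
    have hlt : ‖Complex.exp (-μ)‖ < 1 := by
      rw [this]
      exact Real.exp_lt_one_iff.mpr (by simpa using (hspec μ hμ))
    exact_mod_cast hlt
  have hrρ : spectralRadius ℂ T ≤ (ρ : ℝ≥0∞) := by
    rw [spectralRadius]
    refine iSup₂_le fun k hk => ?_
    exact ENNReal.coe_le_coe.mpr (Finset.le_sup (hfin.mem_toFinset.mpr hk))
  set L : ℝ := (spectralRadius ℂ T).toReal with hLdef
  have hrne : spectralRadius ℂ T ≠ ⊤ := ne_top_of_le_ne_top ENNReal.coe_ne_top hrρ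
  have hL0 : 0 ≤ L := ENNReal.toReal_nonneg
  have hL1 : L < 1 := by
    have := ENNReal.toReal_mono ENNReal.coe_ne_top hrρ
    simp only [ENNReal.coe_toReal] at this
    exact lt_of_le_of_lt this (by exact_mod_cast hρ1)
  set c : ℝ := (L + 1) / 2 with hcdef
  have hc0 : 0 < c := by positivity
  have hc1 : c < 1 := by rw [hcdef]; linarith
  have hLc : L < c := by rw [hcdef]; linarith
  -- Gelfand
  have hrc : spectralRadius ℂ T < ENNReal.ofReal c := by
    rw [← ENNReal.ofReal_toReal hrne]
    exact ENNReal.ofReal_lt_ofReal_iff (by linarith) |>.mpr hLc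
  have htend := spectrum.pow_nnnorm_pow_one_div_tendsto_nhds_spectralRadius T
  have hev : ∀ᶠ n : ℕ in atTop, ((‖T ^ n‖₊ : ℝ≥0∞)) ^ (1 / (n:ℝ)) < ENNReal.ofReal c :=
    htend.eventually_lt_const hrc
  obtain ⟨N, hN⟩ := hev.exists_forall_of_atTop
  set N' := max N 1 with hN'def
  have hgeo : ∀ n : ℕ, N' ≤ n → ‖T ^ n‖ ≤ c ^ n := by
    intro n hn
    have hn1 : 1 ≤ n := le_trans (le_max_right N 1) hn
    have hnN : N ≤ n := le_trans (le_max_left N 1) hn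
    have h := hN n hnN
    have hne : (n : ℝ) ≠ 0 := Nat.cast_ne_zero.mpr (by omega)
    have h2 : ((‖T ^ n‖₊ : ℝ≥0∞) ^ (1 / (n:ℝ))) ^ (n:ℝ) ≤ (ENNReal.ofReal c) ^ (n:ℝ) :=
      ENNReal.rpow_le_rpow h.le (by positivity)
    rw [← ENNReal.rpow_mul, one_div_mul_cancel hne, ENNReal.rpow_one] at h2
    rw [ENNReal.rpow_natCast, ← ENNReal.ofReal_pow hc0.le] at h2
    have h3 : ENNReal.ofReal ‖T ^ n‖ ≤ ENNReal.ofReal (c ^ n) := by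
      rw [ofReal_norm]
      exact h2
    exact (ENNReal.ofReal_le_ofReal_iff (by positivity)).mp h3
  -- initial segment
  have hrange : (Finset.range N').Nonempty := ⟨0, Finset.mem_range.mpr (by omega)⟩
  set K : ℝ := max 1 ((Finset.range N').sup' hrange (fun n => ‖T ^ n‖ / c ^ n)) with hKdef
  have hK1 : 1 ≤ K := le_max_left _ _
  have hK : ∀ n : ℕ, ‖T ^ n‖ ≤ K * c ^ n := by
    intro n
    rcases lt_or_ge n N' with h | h
    · have h1 : ‖T ^ n‖ / c ^ n ≤ K := le_trans
        (Finset.le_sup' (f := fun n => ‖T ^ n‖ / c ^ n) (Finset.mem_range.mpr h)) (le_max_right _ _)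
      calc ‖T ^ n‖ = (‖T ^ n‖ / c ^ n) * c ^ n := by field_simp
        _ ≤ K * c ^ n := by
            have := pow_pos hc0 n
            exact mul_le_mul_of_nonneg_right h1 (by positivity)
    · calc ‖T ^ n‖ ≤ c ^ n := hgeo n h
        _ ≤ K * c ^ n := by nlinarith [pow_pos hc0 n]
  -- bound on exp(θ • (-A)) for θ ∈ [0,1]
  obtain ⟨M0, hM0⟩ := isCompact_Icc.exists_bound_of_continuousOn
    (f := fun θ : ℝ => NormedSpace.exp (θ • (-A)))
    ((NormedSpace.exp_continuous.comp (continuous_id.smul continuous_const)).continuousOn)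
  set M : ℝ := max M0 1 with hMdef
  have hM1 : 1 ≤ M := le_max_right _ _
  have hM : ∀ θ ∈ Icc (0:ℝ) 1, ‖NormedSpace.exp (θ • (-A))‖ ≤ M :=
    fun θ hθ => le_trans (hM0 θ hθ) (le_max_left _ _)
  -- final constants
  set ε : ℝ := -Real.log c with hεdef
  have hε : 0 < ε := by
    rw [hεdef]
    simpa using Real.log_neg hc0 hc1
  refine ⟨K * M * c⁻¹, by positivity, ε, hε, ?_⟩
  intro x s hs
  obtain ⟨hs0, hs1⟩ := hs
  set t : ℝ := -Real.log s with htdef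
  have hlog : Real.log s = -t := by rw [htdef]; ring
  have ht0 : 0 ≤ t := by
    rw [htdef]
    simpa using Real.log_nonpos hs0.le hs1
  set n : ℕ := ⌊t⌋₊ with hndef
  set θ : ℝ := t - n with hθdef
  have hθ0 : 0 ≤ θ := sub_nonneg.mpr (Nat.floor_le ht0)
  have hθ1 : θ ≤ 1 := by
    have := Nat.lt_floor_add_one t
    rw [hθdef]; push_cast; linarith
  have htn : t - 1 ≤ (n : ℝ) := by
    have := Nat.lt_floor_add_one t
    push_cast; linarith
  -- rewrite exp
  have hsmul : Real.log s • A = (n:ℝ) • (-A) + θ • (-A) := by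
    have hnt : (n:ℝ) + θ = t := by rw [hθdef]; ring
    rw [smul_neg, smul_neg, ← neg_add, ← add_smul, hnt, hlog, neg_smul]
  have hsplit : NormedSpace.exp (Real.log s • A) = T ^ n * NormedSpace.exp (θ • (-A)) := by
    rw [hsmul, Matrix.exp_add_of_commute _ _ (((Commute.refl (-A)).smul_left (n:ℝ)).smul_right θ)]
    congr 1
    rw [Nat.cast_smul_eq_nsmul, Matrix.exp_nsmul]
  have hnorm1 : ‖NormedSpace.exp (Real.log s • A)‖ ≤ K * c ^ n * M := by
    rw [hsplit]
    calc ‖T ^ n * NormedSpace.exp (θ • (-A))‖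
        ≤ ‖T ^ n‖ * ‖NormedSpace.exp (θ • (-A))‖ := norm_mul_le _ _
      _ ≤ (K * c ^ n) * M := by
          apply mul_le_mul (hK n) (hM θ ⟨hθ0, hθ1⟩) (norm_nonneg _) (by positivity)
  -- c ^ n ≤ c⁻¹ * s ^ ε
  have hcn : c ^ n ≤ c⁻¹ * s ^ ε := by
    have h1 : (c : ℝ) ^ (n : ℝ) ≤ c ^ (t - 1) :=
      Real.rpow_le_rpow_of_exponent_ge hc0 hc1.le htn
    rw [Real.rpow_natCast] at h1
    have h2 : c ^ (t - 1) = c⁻¹ * c ^ t := by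
      rw [Real.rpow_sub hc0, Real.rpow_one]
      ring
    have h3 : c ^ t = s ^ ε := by
      rw [Real.rpow_def_of_pos hc0, Real.rpow_def_of_pos hs0, hεdef, htdef]
      ring_nf
    rw [h2, h3] at h1
    exact h1
  -- put it together
  have key : ‖(NormedSpace.exp (Real.log s • B)).mulVec x‖
      ≤ ‖NormedSpace.exp (Real.log s • A)‖ * ‖x‖ := by
    rw [aux_mulVec_complexify, aux_map_exp]
    have hsm : (Real.log s • B).map (algebraMap ℝ ℂ) = Real.log s • A := by
      rw [hA]
      ext i j
      simp [Matrix.map_apply, Matrix.smul_apply, Complex.real_smul]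
    rw [hsm]
    calc ‖(NormedSpace.exp (Real.log s • A)).mulVec fun i => ((x i : ℝ) : ℂ)‖
        ≤ ‖NormedSpace.exp (Real.log s • A)‖ * ‖(fun i => ((x i : ℝ) : ℂ))‖ :=
          Matrix.linfty_opNorm_mulVec _ _
      _ = ‖NormedSpace.exp (Real.log s • A)‖ * ‖x‖ := by rw [aux_norm_complexify]
  calc ‖(NormedSpace.exp (Real.log s • B)).mulVec x‖
      ≤ ‖NormedSpace.exp (Real.log s • A)‖ * ‖x‖ := key
    _ ≤ (K * c ^ n * M) * ‖x‖ := mul_le_mul_of_nonneg_right hnorm1 (norm_nonneg _)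
    _ = (K * M * ‖x‖) * c ^ n := by ring
    _ ≤ (K * M * ‖x‖) * (c⁻¹ * s ^ ε) := mul_le_mul_of_nonneg_left hcn (by positivity)
    _ = (K * M * c⁻¹) * s ^ ε * ‖x‖ := by ring


lemma aux_meas (B : Matrix (Fin d) (Fin d) ℝ) (x : Fin d → ℝ) :
    Measurable (fun s : ℝ => ‖(NormedSpace.exp (Real.log s • B)).mulVec x‖) := by
  have hcont : Continuous fun r : ℝ => ‖(NormedSpace.exp (r • B)).mulVec x‖ := by
    letI : SeminormedRing (Matrix (Fin d) (Fin d) ℝ) := Matrix.linftyOpSemiNormedRing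
    letI : NormedRing (Matrix (Fin d) (Fin d) ℝ) := Matrix.linftyOpNormedRing
    letI : NormedAlgebra ℝ (Matrix (Fin d) (Fin d) ℝ) := Matrix.linftyOpNormedAlgebra
    exact ((NormedSpace.exp_continuous.comp
      (continuous_id.smul continuous_const)).matrix_mulVec continuous_const).norm
  exact hcont.measurable.comp Real.measurable_log

lemma aux_mulVec_ne_zero (M : Matrix (Fin d) (Fin d) ℝ) (hM : IsUnit M) {x : Fin d → ℝ}
    (hx : x ≠ 0) : M.mulVec x ≠ 0 := by
  obtain ⟨u, rfl⟩ := hM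
  intro h
  apply hx
  have h2 := congrArg (fun v => (↑u⁻¹ : Matrix (Fin d) (Fin d) ℝ).mulVec v) h
  simp only [Matrix.mulVec_mulVec, Units.inv_mul, Matrix.one_mulVec, Matrix.mulVec_zero] at h2
  exact h2

lemma aux_integrableOn (B : Matrix (Fin d) (Fin d) ℝ) (p : ℝ) (hp : 1 ≤ p)
    (hspec : ∀ μ ∈ spectrum ℂ (B.map (algebraMap ℝ ℂ)), 0 < μ.re) (x : Fin d → ℝ) :
    IntegrableOn
      (fun s => ‖(NormedSpace.exp (Real.log s • B)).mulVec x‖ ^ p / s) (Ioc (0:ℝ) 1) := by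
  obtain ⟨C, hC, ε, hε, hbound⟩ := aux_decay B hspec
  have hεp : (-1:ℝ) < ε * p - 1 := by nlinarith
  have hdom : IntegrableOn (fun s : ℝ => (C * ‖x‖) ^ p * s ^ (ε * p - 1)) (Ioc (0:ℝ) 1) := by
    apply Integrable.const_mul
    have h := intervalIntegral.intervalIntegrable_rpow' (a := (0:ℝ)) (b := 1) hεp
    rw [intervalIntegrable_iff, uIoc_of_le (by norm_num : (0:ℝ) ≤ 1)] at h
    exact h
  refine hdom.mono' ?_ ?_
  · exact (((Real.continuous_rpow_const (by linarith)).measurable.comp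
      (aux_meas B x)).div measurable_id).aestronglyMeasurable
  · rw [ae_restrict_iff' measurableSet_Ioc]
    filter_upwards with s hs
    obtain ⟨hs0, hs1⟩ := hs
    have h1 := hbound x s ⟨hs0, hs1⟩
    have hg0 : (0:ℝ) ≤ ‖(NormedSpace.exp (Real.log s • B)).mulVec x‖ := norm_nonneg _
    have h2 : ‖(NormedSpace.exp (Real.log s • B)).mulVec x‖ ^ p ≤ (C * s ^ ε * ‖x‖) ^ p :=
      Real.rpow_le_rpow hg0 h1 (by linarith)
    have h3 : (C * s ^ ε * ‖x‖) ^ p = (C * ‖x‖) ^ p * s ^ (ε * p) := by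
      have : C * s ^ ε * ‖x‖ = (C * ‖x‖) * s ^ ε := by ring
      rw [this, Real.mul_rpow (by positivity) (Real.rpow_nonneg hs0.le ε), Real.rpow_mul hs0.le]
    have h4 : (C * ‖x‖) ^ p * s ^ (ε * p) / s = (C * ‖x‖) ^ p * s ^ (ε * p - 1) := by
      rw [Real.rpow_sub hs0, Real.rpow_one, mul_div_assoc]
    rw [Real.norm_eq_abs, abs_of_nonneg (by positivity)]
    calc ‖(NormedSpace.exp (Real.log s • B)).mulVec x‖ ^ p / s
        ≤ (C * s ^ ε * ‖x‖) ^ p / s := by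
          exact div_le_div_of_nonneg_right h2 hs0.le
      _ = (C * ‖x‖) ^ p * s ^ (ε * p - 1) := by rw [h3, h4]

noncomputable def nuB : Measure ℝ :=
  (volume.restrict (Ioc (0:ℝ) 1)).withDensity (fun s => ENNReal.ofReal s⁻¹)

lemma aux_integral_nu (g : ℝ → ℝ) :
    ∫ s, g s ∂nuB = ∫ s in Ioc (0:ℝ) 1, g s / s := by
  rw [nuB]
  have hf : Measurable fun s : ℝ => Real.toNNReal s⁻¹ :=
    measurable_real_toNNReal.comp measurable_inv
  have he : (fun s : ℝ => ENNReal.ofReal s⁻¹)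
      = fun s => ((Real.toNNReal s⁻¹ : ℝ≥0) : ℝ≥0∞) := rfl
  rw [he, integral_withDensity_eq_integral_smul hf]
  refine integral_congr_ae ?_
  filter_upwards [ae_restrict_mem measurableSet_Ioc] with s hs
  obtain ⟨hs0, _⟩ := hs
  rw [NNReal.smul_def, Real.coe_toNNReal _ (inv_nonneg.mpr hs0.le), smul_eq_mul,
    div_eq_mul_inv, mul_comm]

lemma aux_integrable_nu (g : ℝ → ℝ) (hg : Measurable g)
    (h : IntegrableOn (fun s => g s / s) (Ioc (0:ℝ) 1)) : Integrable g nuB := by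
  rw [nuB, integrable_withDensity_iff measurable_inv.ennreal_ofReal
    (ae_of_all _ fun s => ENNReal.ofReal_lt_top)]
  refine h.congr ?_
  filter_upwards [ae_restrict_mem measurableSet_Ioc] with s hs
  obtain ⟨hs0, _⟩ := hs
  rw [ENNReal.toReal_ofReal (inv_nonneg.mpr hs0.le), div_eq_mul_inv]


end aux

/-- If all eigenvalues of `B` have positive real part and `1 ≤ p < ∞`, then `‖·‖_B`
is a norm on `ℝ^d`: triangle inequality, absolute homogeneity, and positivity. -/
theorem stmt_9 (d : ℕ) (B : Matrix (Fin d) (Fin d) ℝ) (p : ℝ) (hp : 1 ≤ p)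
    (hspec : ∀ μ ∈ spectrum ℂ (B.map (algebraMap ℝ ℂ)), 0 < μ.re) :
    (∀ x y : Fin d → ℝ, normB B p (x + y) ≤ normB B p x + normB B p y) ∧
    (∀ (a : ℝ) (x : Fin d → ℝ), normB B p (a • x) = |a| * normB B p x) ∧
    (∀ x : Fin d → ℝ, x ≠ 0 → 0 < normB B p x) := by
  classical
  have hp0 : p ≠ 0 := by linarith
  have hp0' : (0:ℝ) < p := by linarith
  set G : (Fin d → ℝ) → ℝ → ℝ :=
    fun x s => ‖(NormedSpace.exp (Real.log s • B)).mulVec x‖ with hGdef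
  have measG : ∀ x, Measurable (G x) := fun x => aux_meas B x
  have hGnn : ∀ x s, 0 ≤ G x s := fun x s => norm_nonneg _
  have measGp : ∀ x, Measurable (fun s => G x s ^ p) := fun x =>
    (Real.continuous_rpow_const (by linarith)).measurable.comp (measG x)
  have intOn : ∀ x, IntegrableOn (fun s => G x s ^ p / s) (Ioc (0:ℝ) 1) :=
    fun x => aux_integrableOn B p hp hspec x
  have intNu : ∀ x, Integrable (fun s => G x s ^ p) nuB :=
    fun x => aux_integrable_nu _ (measGp x) (intOn x)
  set P : ℝ≥0∞ := ENNReal.ofReal p with hPdef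
  have hP0 : P ≠ 0 := by
    simp only [hPdef, ne_eq, ENNReal.ofReal_eq_zero, not_le]; linarith
  have hPtop : P ≠ ⊤ := ENNReal.ofReal_ne_top
  have hPto : P.toReal = p := ENNReal.toReal_ofReal (by linarith)
  have memLp : ∀ x, MemLp (G x) P nuB := by
    intro x
    have hiff := memLp_norm_rpow_iff (μ := nuB) (q := P) (p := P) (measG x).aestronglyMeasurable hP0 hPtop
    rw [ENNReal.div_self hP0 hPtop] at hiff
    refine hiff.mp ?_
    rw [memLp_one_iff_integrable]
    refine (intNu x).congr (ae_of_all _ fun s => ?_)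
    simp only [hPto, Real.norm_eq_abs]
    rw [abs_of_nonneg (hGnn x s)]
  have normB_eq : ∀ x, normB B p x = (∫ s, G x s ^ p ∂nuB) ^ (1/p) := by
    intro x
    rw [normB, aux_integral_nu (fun s => G x s ^ p)]
  have int_nonneg : ∀ x, (0:ℝ) ≤ ∫ s, G x s ^ p ∂nuB := fun x =>
    integral_nonneg fun s => Real.rpow_nonneg (norm_nonneg _) p
  have eLp_eq : ∀ x, eLpNorm (G x) P nuB
      = ENNReal.ofReal ((∫ s, G x s ^ p ∂nuB) ^ (1/p)) := by
    intro x
    rw [(memLp x).eLpNorm_eq_integral_rpow_norm hP0 hPtop, hPto, one_div]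
    congr 2
    refine integral_congr_ae (ae_of_all _ fun s => ?_)
    simp only [Real.norm_eq_abs]
    rw [abs_of_nonneg (hGnn x s)]
  refine ⟨?_, ?_, ?_⟩
  · -- triangle
    intro x y
    have hle : ∀ s, G (x + y) s ≤ G x s + G y s := by
      intro s
      simpa [hGdef, Matrix.mulVec_add] using norm_add_le _ _
    have memxy : MemLp (fun s => G x s + G y s) P nuB := (memLp x).add (memLp y)
    have intxy : Integrable (fun s => (G x s + G y s) ^ p) nuB := by
      have h2 := memxy.integrable_norm_rpow hP0 hPtop
      refine h2.congr (ae_of_all _ fun s => ?_)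
      simp only [hPto, Real.norm_eq_abs]
      rw [abs_of_nonneg (add_nonneg (norm_nonneg _) (norm_nonneg _))]
    have step2 : ∫ s, G (x+y) s ^ p ∂nuB ≤ ∫ s, (G x s + G y s) ^ p ∂nuB := by
      refine integral_mono (intNu (x+y)) intxy fun s => ?_
      exact Real.rpow_le_rpow (norm_nonneg _) (hle s) (by linarith)
    have hIxy2_nonneg : (0:ℝ) ≤ ∫ s, (G x s + G y s) ^ p ∂nuB :=
      integral_nonneg fun s => Real.rpow_nonneg (add_nonneg (norm_nonneg _) (norm_nonneg _)) p
    have eLpxy : eLpNorm (fun s => G x s + G y s) P nuB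
        = ENNReal.ofReal ((∫ s, (G x s + G y s) ^ p ∂nuB) ^ (1/p)) := by
      rw [memxy.eLpNorm_eq_integral_rpow_norm hP0 hPtop, hPto, one_div]
      congr 2
      refine integral_congr_ae (ae_of_all _ fun s => ?_)
      simp only [Real.norm_eq_abs]
      rw [abs_of_nonneg (add_nonneg (norm_nonneg _) (norm_nonneg _))]
    have tri := eLpNorm_add_le (μ := nuB) (p := P)
      (measG x).aestronglyMeasurable (measG y).aestronglyMeasurable
      (ENNReal.one_le_ofReal.mpr hp)
    have hGxy : (G x + G y) = fun s => G x s + G y s := rfl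
    rw [hGxy, eLpxy, eLp_eq x, eLp_eq y, ← ENNReal.ofReal_add
      (Real.rpow_nonneg (int_nonneg x) _) (Real.rpow_nonneg (int_nonneg y) _)] at tri
    have step3 : (∫ s, (G x s + G y s) ^ p ∂nuB) ^ (1/p)
        ≤ (∫ s, G x s ^ p ∂nuB) ^ (1/p) + (∫ s, G y s ^ p ∂nuB) ^ (1/p) :=
      (ENNReal.ofReal_le_ofReal_iff
        (add_nonneg (Real.rpow_nonneg (int_nonneg x) _)
          (Real.rpow_nonneg (int_nonneg y) _))).mp tri
    rw [normB_eq (x+y), normB_eq x, normB_eq y]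
    calc (∫ s, G (x+y) s ^ p ∂nuB) ^ (1/p)
        ≤ (∫ s, (G x s + G y s) ^ p ∂nuB) ^ (1/p) :=
          Real.rpow_le_rpow (int_nonneg (x+y)) step2 (by positivity)
      _ ≤ _ := step3
  · -- homogeneity
    intro a x
    have hG : ∀ s, G (a • x) s = |a| * G x s := by
      intro s
      rw [hGdef]
      simp only
      rw [Matrix.mulVec_smul, norm_smul, Real.norm_eq_abs]
    rw [normB_eq (a • x), normB_eq x]
    have : (fun s => G (a • x) s ^ p) = fun s => |a| ^ p * G x s ^ p := by
      funext s
      rw [hG s, Real.mul_rpow (abs_nonneg a) (norm_nonneg _)]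
    rw [this, integral_const_mul, Real.mul_rpow (Real.rpow_nonneg (abs_nonneg a) p)
      (int_nonneg x), ← Real.rpow_mul (abs_nonneg a), mul_one_div_cancel hp0, Real.rpow_one]
  · -- positivity
    intro x hx
    have hpos : ∀ s ∈ Ioc (0:ℝ) 1, 0 < G x s ^ p / s := by
      intro s hs
      have hunit : IsUnit (NormedSpace.exp (Real.log s • B)) := Matrix.isUnit_exp _
      have hne : (NormedSpace.exp (Real.log s • B)).mulVec x ≠ 0 :=
        aux_mulVec_ne_zero _ hunit hx
      have hg : 0 < G x s := norm_pos_iff.mpr hne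
      exact div_pos (Real.rpow_pos_of_pos hg p) hs.1
    have hint : 0 < ∫ s in Ioc (0:ℝ) 1, G x s ^ p / s := by
      rw [setIntegral_pos_iff_support_of_nonneg_ae ?_ (intOn x)]
      · have hsub : Ioc (0:ℝ) 1 ⊆ Function.support (fun s => G x s ^ p / s) :=
          fun s hs => (hpos s hs).ne'
        have : Function.support (fun s => G x s ^ p / s) ∩ Ioc (0:ℝ) 1 = Ioc (0:ℝ) 1 :=
          inter_eq_self_of_subset_right hsub
        rw [this]
        simp [Real.volume_Ioc]
      · filter_upwards [ae_restrict_mem measurableSet_Ioc] with s hs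
        exact (hpos s hs).le
    rw [normB]
    exact Real.rpow_pos_of_pos hint (1/p)
end

section
/- With ‖x‖_B = (∫₀¹ ‖s^B x‖^p s^{-1} ds)^{1/p} as above (all eigenvalues of B with positive real part), for each x ≠ 0 the map t ↦ ‖t^B x‖_B is strictly increasing in t > 0. -/
open Matrix Set MeasureTheory

namespace JM

open NormedSpace Filter Nat


variable {d : ℕ}

noncomputable def mvR (v : Fin d → ℂ) : Matrix (Fin d) (Fin d) ℂ →ₗ[ℂ] (Fin d → ℂ) where
  toFun M := M.mulVec v
  map_add' A B := Matrix.add_mulVec A B v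
  map_smul' c A := Matrix.smul_mulVec c A v

lemma exp_mulVec (M : Matrix (Fin d) (Fin d) ℂ) (v : Fin d → ℂ) :
    (exp M).mulVec v = ∑' n : ℕ, (n ! : ℂ)⁻¹ • ((M ^ n).mulVec v) := by
  letI : SeminormedRing (Matrix (Fin d) (Fin d) ℂ) := Matrix.linftyOpSemiNormedRing
  letI : NormedRing (Matrix (Fin d) (Fin d) ℂ) := Matrix.linftyOpNormedRing
  letI : NormedAlgebra ℂ (Matrix (Fin d) (Fin d) ℂ) := Matrix.linftyOpNormedAlgebra
  have hs : Summable (fun n : ℕ => (n ! : ℂ)⁻¹ • M ^ n) := expSeries_summable' M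
  have hc := LinearMap.continuous_of_finiteDimensional (mvR v)
  let L : Matrix (Fin d) (Fin d) ℂ →L[ℂ] (Fin d → ℂ) := ⟨mvR v, hc⟩
  have h1 : (exp M).mulVec v = L (exp M) := rfl
  rw [h1, exp_eq_tsum ℂ, L.map_tsum hs]
  exact tsum_congr fun n => by simp [L, mvR, Matrix.smul_mulVec]



variable {d : ℕ}


lemma exp_smul_mulVec_trunc (N : Matrix (Fin d) (Fin d) ℂ) (v : Fin d → ℂ) {k : ℕ}
    (hv : (N ^ k).mulVec v = 0) (c : ℂ) :
    (exp (c • N)).mulVec v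
      = ∑ n ∈ Finset.range k, ((n ! : ℂ)⁻¹ * c ^ n) • ((N ^ n).mulVec v) := by
  have hzero : ∀ n, k ≤ n → (N ^ n).mulVec v = 0 := by
    intro n hn
    have : N ^ n = N ^ (n - k) * N ^ k := by rw [← pow_add]; congr 1; omega
    rw [this, ← Matrix.mulVec_mulVec, hv, Matrix.mulVec_zero]
  rw [exp_mulVec]
  rw [tsum_eq_sum (s := Finset.range k)
      (fun n hn => by
        rw [smul_pow, Matrix.smul_mulVec, hzero n (by simpa using hn), smul_zero,
          smul_zero])]
  exact Finset.sum_congr rfl fun n _ => by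
    rw [smul_pow, Matrix.smul_mulVec, smul_smul]

lemma exp_split (Bc : Matrix (Fin d) (Fin d) ℂ) (μ : ℂ) (c : ℂ) :
    exp (c • Bc) = Complex.exp (c * μ) • exp (c • (Bc - μ • 1)) := by
  letI : SeminormedRing (Matrix (Fin d) (Fin d) ℂ) := Matrix.linftyOpSemiNormedRing
  letI : NormedRing (Matrix (Fin d) (Fin d) ℂ) := Matrix.linftyOpNormedRing
  letI : NormedAlgebra ℂ (Matrix (Fin d) (Fin d) ℂ) := Matrix.linftyOpNormedAlgebra
  letI : NormedAlgebra ℚ (Matrix (Fin d) (Fin d) ℂ) := Matrix.linftyOpNormedAlgebra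
  have hsplit : c • Bc = (c * μ) • (1 : Matrix (Fin d) (Fin d) ℂ) + c • (Bc - μ • 1) := by
    rw [smul_sub, smul_smul]; abel
  have hcomm : Commute ((c * μ) • (1 : Matrix (Fin d) (Fin d) ℂ)) (c • (Bc - μ • 1)) :=
    ((Commute.one_left _).smul_left _)
  rw [hsplit, Matrix.exp_add_of_commute _ _ hcomm]
  have h1 : ((c * μ) • (1 : Matrix (Fin d) (Fin d) ℂ)) = algebraMap ℂ _ (c * μ) :=
    (Algebra.algebraMap_eq_smul_one _).symm
  rw [h1, show exp (algebraMap ℂ (Matrix (Fin d) (Fin d) ℂ) (c * μ))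
      = algebraMap ℂ _ (exp (c * μ)) from (algebraMap_exp_comm (c * μ)).symm,
    ← Complex.exp_eq_exp_ℂ, Algebra.algebraMap_eq_smul_one,
    smul_mul_assoc, one_mul]



lemma tendsto_abs_pow_mul_exp (n : ℕ) {δ : ℝ} (hδ : 0 < δ) :
    Tendsto (fun u : ℝ => |u| ^ n * Real.exp (δ * u)) atBot (nhds 0) := by
  have h1 : Tendsto (fun x : ℝ => x ^ n * Real.exp (-x)) atTop (nhds 0) :=
    Real.tendsto_pow_mul_exp_neg_atTop_nhds_zero n
  have h2 : Tendsto (fun x : ℝ => (δ * x) ^ n * Real.exp (-(δ * x))) atTop (nhds 0) :=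
    h1.comp (tendsto_id.const_mul_atTop hδ)
  have h3 : Tendsto (fun x : ℝ => x ^ n * Real.exp (-(δ * x))) atTop (nhds 0) := by
    have := h2.const_mul ((δ ^ n)⁻¹)
    rw [mul_zero] at this
    refine this.congr fun x => ?_
    rw [mul_pow, ← mul_assoc, ← mul_assoc, inv_mul_cancel₀ (by positivity), one_mul]
  have h4 := h3.comp tendsto_neg_atBot_atTop
  refine h4.congr' ?_
  filter_upwards [eventually_le_atBot (0 : ℝ)] with u hu
  simp only [Function.comp]
  rw [abs_of_nonpos hu]
  ring_nf



variable {d : ℕ}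





lemma tendsto_gen (Bc : Matrix (Fin d) (Fin d) ℂ) (μ : ℂ) (v : Fin d → ℂ) (k : ℕ)
    (hv : (((Bc - μ • 1)) ^ k).mulVec v = 0) {ε : ℝ} (hεμ : ε < μ.re) :
    Tendsto (fun u : ℝ => Real.exp (-(ε * u)) • (exp ((u : ℂ) • Bc)).mulVec v)
      atBot (nhds 0) := by
  have key : ∀ u : ℝ, Real.exp (-(ε * u)) • (exp ((u : ℂ) • Bc)).mulVec v
      = ∑ n ∈ Finset.range k,
          (((Real.exp (-(ε * u)) : ℝ) : ℂ) * Complex.exp ((u : ℂ) * μ)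
              * ((n ! : ℂ)⁻¹ * (u : ℂ) ^ n)) • (((Bc - μ • 1) ^ n).mulVec v) := by
    intro u
    rw [exp_split Bc μ, Matrix.smul_mulVec, exp_smul_mulVec_trunc _ _ hv,
      Finset.smul_sum, Finset.smul_sum]
    refine Finset.sum_congr rfl fun n _ => ?_
    rw [← smul_assoc, Complex.real_smul, ← mul_assoc, smul_smul]
    congr 1
    ring
  rw [show (0 : Fin d → ℂ) = ∑ n ∈ Finset.range k, (0 : Fin d → ℂ) by simp]
  simp only [funext key]
  refine tendsto_finset_sum _ fun n _ => ?_
  have hnorm : ∀ u : ℝ,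
      ‖((Real.exp (-(ε * u)) : ℝ) : ℂ) * Complex.exp ((u : ℂ) * μ)
          * ((n ! : ℂ)⁻¹ * (u : ℂ) ^ n)‖
        = (n ! : ℝ)⁻¹ * (|u| ^ n * Real.exp ((μ.re - ε) * u)) := by
    intro u
    rw [norm_mul, norm_mul, Complex.norm_exp]
    have h1 : ((u : ℂ) * μ).re = u * μ.re := by simp
    have h2 : ‖((Real.exp (-(ε * u)) : ℝ) : ℂ)‖ = Real.exp (-(ε * u)) := by
      rw [Complex.norm_real, Real.norm_eq_abs, abs_of_pos (Real.exp_pos _)]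
    have h3 : ‖((n ! : ℂ)⁻¹ * (u : ℂ) ^ n)‖ = (n ! : ℝ)⁻¹ * |u| ^ n := by
      rw [norm_mul, norm_inv, norm_pow]
      simp
    rw [h1, h2, h3, ← Real.exp_add]
    ring_nf
  have hscal : Tendsto (fun u : ℝ =>
      ((Real.exp (-(ε * u)) : ℝ) : ℂ) * Complex.exp ((u : ℂ) * μ)
        * ((n ! : ℂ)⁻¹ * (u : ℂ) ^ n)) atBot (nhds 0) := by
    apply squeeze_zero_norm (fun u => le_of_eq (hnorm u))
    have := (tendsto_abs_pow_mul_exp n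
      (show (0:ℝ) < μ.re - ε by linarith)).const_mul ((n ! : ℝ)⁻¹)
    simpa using this
  simpa using hscal.smul_const (((Bc - μ • 1) ^ n).mulVec v)



variable {d : ℕ}

lemma norm_complexify (B : Matrix (Fin d) (Fin d) ℝ) (x : Fin d → ℝ) (u : ℝ) :
    ‖(exp (u • B)).mulVec x‖
      = ‖(exp ((u : ℂ) • B.map (algebraMap ℝ ℂ))).mulVec (fun i => (x i : ℂ))‖ := by
  letI : SeminormedRing (Matrix (Fin d) (Fin d) ℂ) := Matrix.linftyOpSemiNormedRing
  letI : NormedRing (Matrix (Fin d) (Fin d) ℂ) := Matrix.linftyOpNormedRing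
  letI : NormedAlgebra ℝ (Matrix (Fin d) (Fin d) ℂ) := Matrix.linftyOpNormedAlgebra
  letI : SeminormedRing (Matrix (Fin d) (Fin d) ℝ) := Matrix.linftyOpSemiNormedRing
  letI : NormedRing (Matrix (Fin d) (Fin d) ℝ) := Matrix.linftyOpNormedRing
  letI : NormedAlgebra ℝ (Matrix (Fin d) (Fin d) ℝ) := Matrix.linftyOpNormedAlgebra
  letI : NormedAlgebra ℚ (Matrix (Fin d) (Fin d) ℂ) := Matrix.linftyOpNormedAlgebra
  letI : NormedAlgebra ℚ (Matrix (Fin d) (Fin d) ℝ) := Matrix.linftyOpNormedAlgebra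
  have hcont : Continuous fun M : Matrix (Fin d) (Fin d) ℝ => M.map (algebraMap ℝ ℂ) :=
    continuous_id.matrix_map (continuous_algebraMap ℝ ℂ)
  have h1 : (exp (u • B)).map (algebraMap ℝ ℂ)
      = exp ((u • B).map (algebraMap ℝ ℂ)) :=
    map_exp ((algebraMap ℝ ℂ).mapMatrix) hcont (u • B)
  have h2 : (u • B).map (algebraMap ℝ ℂ) = (u : ℂ) • B.map (algebraMap ℝ ℂ) := by
    ext i j
    simp [Matrix.map_apply, Algebra.algebraMap_self, Complex.real_smul]
  have h3 : exp ((u : ℂ) • B.map (algebraMap ℝ ℂ))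
      = exp ((u : ℂ) • B.map (algebraMap ℝ ℂ)) :=
    rfl
  have h4 : (exp ((u : ℂ) • B.map (algebraMap ℝ ℂ))).mulVec (fun i => (x i : ℂ))
      = fun i => (((exp (u • B)).mulVec x i : ℝ) : ℂ) := by
    funext i
    rw [← h3, ← h2, ← h1]
    exact (RingHom.map_mulVec (algebraMap ℝ ℂ) (exp (u • B)) x i).symm
  rw [h4]
  simp only [Pi.norm_def, Pi.nnnorm_def]
  congr 1
  apply Finset.sup_congr rfl
  intro i _
  simp [nnnorm]

lemma exp_mulVec_ne_zero (M : Matrix (Fin d) (Fin d) ℝ) {x : Fin d → ℝ} (hx : x ≠ 0) :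
    (exp M).mulVec x ≠ 0 := by
  intro h
  apply hx
  have hinv : exp (-M) * exp M = 1 := by
    rw [← Matrix.exp_add_of_commute _ _ ((Commute.refl M).neg_left), neg_add_cancel, exp_zero]
  calc x = ((1 : Matrix (Fin d) (Fin d) ℝ)).mulVec x := (Matrix.one_mulVec x).symm
    _ = (exp (-M)).mulVec ((exp M).mulVec x) := by rw [← hinv, ← Matrix.mulVec_mulVec]
    _ = 0 := by rw [h, Matrix.mulVec_zero]



variable {d : ℕ}


lemma tendsto_downgrade {w : ℝ → (Fin d → ℂ)} {ε ε' : ℝ} (h : ε' ≤ ε)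
    (ht : Tendsto (fun u => Real.exp (-(ε * u)) • w u) atBot (nhds 0)) :
    Tendsto (fun u => Real.exp (-(ε' * u)) • w u) atBot (nhds 0) := by
  apply squeeze_zero_norm' ?_ (by simpa using ht.norm)
  filter_upwards [eventually_le_atBot (0 : ℝ)] with u hu
  rw [norm_smul, norm_smul, Real.norm_eq_abs, Real.norm_eq_abs,
    abs_of_pos (Real.exp_pos _), abs_of_pos (Real.exp_pos _)]
  have : ε * u ≤ ε' * u := mul_le_mul_of_nonpos_right h hu
  exact mul_le_mul_of_nonneg_right (Real.exp_le_exp.2 (by linarith)) (norm_nonneg _)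

lemma decay (B : Matrix (Fin d) (Fin d) ℝ)
    (hspec : ∀ μ ∈ spectrum ℂ (B.map (algebraMap ℝ ℂ)), 0 < μ.re) (x : Fin d → ℂ) :
    ∃ ε > (0:ℝ), ∃ C : ℝ, ∀ u ≤ (0:ℝ),
      ‖(exp ((u : ℂ) • B.map (algebraMap ℝ ℂ))).mulVec x‖ ≤ C * Real.exp (ε * u) := by
  set Bc := B.map (algebraMap ℝ ℂ) with hBc
  -- the set of good vectors is a submodule
  let S : Submodule ℂ (Fin d → ℂ) :=
    { carrier := {v | ∃ ε > (0:ℝ), Tendsto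
        (fun u : ℝ => Real.exp (-(ε * u)) • (exp ((u : ℂ) • Bc)).mulVec v)
        atBot (nhds 0)}
      add_mem' := by
        rintro a b ⟨ε₁, hε₁, h1⟩ ⟨ε₂, hε₂, h2⟩
        refine ⟨min ε₁ ε₂, lt_min hε₁ hε₂, ?_⟩
        have h1' := tendsto_downgrade (min_le_left ε₁ ε₂) h1
        have h2' := tendsto_downgrade (min_le_right ε₁ ε₂) h2
        have := h1'.add h2'
        rw [add_zero] at this
        refine this.congr fun u => ?_
        rw [← smul_add, ← Matrix.mulVec_add]
      zero_mem' := ⟨1, one_pos, by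
        simp only [Matrix.mulVec_zero, smul_zero]
        exact tendsto_const_nhds⟩
      smul_mem' := by
        rintro c v ⟨ε, hε, h⟩
        refine ⟨ε, hε, ?_⟩
        have := h.const_smul c
        rw [smul_zero] at this
        refine this.congr fun u => ?_
        rw [Matrix.mulVec_smul, smul_comm] }
  -- every vector is good
  have hS : ∀ v : Fin d → ℂ, v ∈ S := by
    have htop := Module.End.iSup_maxGenEigenspace_eq_top (Matrix.toLinAlgEquiv' Bc)
    intro v
    have : v ∈ (⊤ : Submodule ℂ (Fin d → ℂ)) := Submodule.mem_top
    rw [← htop] at this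
    refine (iSup_le fun μ => ?_ : _ ≤ S) this
    intro w hw
    by_cases hw0 : w = 0
    · rw [hw0]; exact S.zero_mem
    obtain ⟨k, hk⟩ := (Module.End.mem_maxGenEigenspace _ _ _).1 hw
    -- μ is an eigenvalue, hence in the spectrum
    have hμspec : μ ∈ spectrum ℂ Bc := by
      rw [← AlgEquiv.spectrum_eq Matrix.toLinAlgEquiv' Bc]
      rw [← Module.End.hasEigenvalue_iff_mem_spectrum]
      refine Module.End.hasEigenvalue_of_hasGenEigenvalue
        (k := k) ?_
      rw [Module.End.hasGenEigenvalue_iff]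
      intro hbot
      have hwmem : w ∈ Module.End.genEigenspace
          (Matrix.toLinAlgEquiv' Bc : Module.End ℂ (Fin d → ℂ)) μ (k : ℕ∞) :=
        Module.End.mem_genEigenspace_nat.2 (LinearMap.mem_ker.2 hk)
      rw [hbot] at hwmem
      exact hw0 ((Submodule.mem_bot ℂ).1 hwmem)
    have hμ : 0 < μ.re := hspec μ hμspec
    -- translate hk to matrix form
    have hk' : (((Bc - μ • 1)) ^ k).mulVec w = 0 := by
      have e1 : Matrix.toLinAlgEquiv' Bc - μ • 1
          = Matrix.toLinAlgEquiv' (Bc - μ • 1) := by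
        rw [map_sub, _root_.map_smul, _root_.map_one]
      rw [← hk, e1, ← map_pow, Matrix.toLinAlgEquiv'_apply]
    exact ⟨μ.re / 2, by linarith, tendsto_gen Bc μ w k hk' (by linarith)⟩
  obtain ⟨ε, hε, htend⟩ := hS x
  refine ⟨ε, hε, ?_⟩
  set g : ℝ → (Fin d → ℂ) :=
    fun u => Real.exp (-(ε * u)) • (exp ((u : ℂ) • Bc)).mulVec x with hg
  -- continuity of g
  have hgc : Continuous g := by
    letI : SeminormedRing (Matrix (Fin d) (Fin d) ℂ) := Matrix.linftyOpSemiNormedRing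
    letI : NormedRing (Matrix (Fin d) (Fin d) ℂ) := Matrix.linftyOpNormedRing
    letI : NormedAlgebra ℂ (Matrix (Fin d) (Fin d) ℂ) := Matrix.linftyOpNormedAlgebra
    letI : NormedAlgebra ℚ (Matrix (Fin d) (Fin d) ℂ) := Matrix.linftyOpNormedAlgebra
    have hexp : Continuous fun u : ℝ => exp ((u : ℂ) • Bc) :=
      exp_continuous.comp ((Complex.continuous_ofReal).smul continuous_const)
    exact ((Real.continuous_exp.comp (continuous_const.mul continuous_id).neg)).smul
      (hexp.matrix_mulVec continuous_const)
  -- bound from the limit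
  have htn : Tendsto (fun u => ‖g u‖) atBot (nhds 0) := by simpa using htend.norm
  obtain ⟨T, hT⟩ := (eventually_atBot).1 (htn.eventually
    (eventually_le_nhds (by norm_num : (0:ℝ) < 1)))
  obtain ⟨C0, hC0⟩ := (isCompact_Icc (a := T) (b := 0)).exists_bound_of_continuousOn
    hgc.continuousOn
  refine ⟨max C0 1, fun u hu => ?_⟩
  have hb : ‖g u‖ ≤ max C0 1 := by
    rcases le_or_gt u T with h | h
    · exact le_trans (by simpa using hT u h) (le_max_right _ _)
    · exact le_trans (hC0 u ⟨h.le, hu⟩) (le_max_left _ _)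
  have hmain : ‖(exp ((u : ℂ) • Bc)).mulVec x‖ = Real.exp (ε * u) * ‖g u‖ := by
    rw [hg]
    simp only [norm_smul, Real.norm_eq_abs, abs_of_pos (Real.exp_pos _)]
    rw [← mul_assoc, ← Real.exp_add]
    simp
  rw [hmain, mul_comm (max C0 1)]
  exact mul_le_mul_of_nonneg_left hb (Real.exp_pos _).le

lemma decay_real (B : Matrix (Fin d) (Fin d) ℝ)
    (hspec : ∀ μ ∈ spectrum ℂ (B.map (algebraMap ℝ ℂ)), 0 < μ.re) (x : Fin d → ℝ) :
    ∃ ε > (0:ℝ), ∃ C ≥ (0:ℝ), ∀ u ≤ (0:ℝ),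
      ‖(exp (u • B)).mulVec x‖ ≤ C * Real.exp (ε * u) := by
  obtain ⟨ε, hε, C, hC⟩ := decay B hspec (fun i => (x i : ℂ))
  refine ⟨ε, hε, max C 0, le_max_right _ _, fun u hu => ?_⟩
  rw [norm_complexify]
  exact le_trans (hC u hu) (mul_le_mul_of_nonneg_right (le_max_left _ _) (Real.exp_pos _).le)


end JM



open JM NormedSpace Filter Nat

/-- For `x ≠ 0`, the map `t ↦ ‖t^B x‖_B` is strictly increasing on `(0,∞)`. -/
theorem stmt_10 (d : ℕ) (B : Matrix (Fin d) (Fin d) ℝ) (p : ℝ) (hp : 1 ≤ p)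
    (hspec : ∀ μ ∈ spectrum ℂ (B.map (algebraMap ℝ ℂ)), 0 < μ.re)
    (x : Fin d → ℝ) (hx : x ≠ 0) :
    StrictMonoOn
      (fun t : ℝ => normB B p ((NormedSpace.exp ((Real.log t) • B)).mulVec x))
      (Ioi (0 : ℝ)) := by
  have hp0 : (0:ℝ) < p := lt_of_lt_of_le one_pos hp
  set g : ℝ → ℝ :=
    fun r => ‖(NormedSpace.exp ((Real.log r) • B)).mulVec x‖ ^ p / r with hgdef
  have hgpos : ∀ r ∈ Ioi (0:ℝ), 0 < g r := by
    intro r hr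
    have hne : (0:ℝ) < ‖(NormedSpace.exp ((Real.log r) • B)).mulVec x‖ :=
      norm_pos_iff.2 (exp_mulVec_ne_zero (Real.log r • B) hx)
    exact div_pos (Real.rpow_pos_of_pos hne p) hr
  have hgcont : ContinuousOn g (Ioi 0) := by
    letI : SeminormedRing (Matrix (Fin d) (Fin d) ℝ) := Matrix.linftyOpSemiNormedRing
    letI : NormedRing (Matrix (Fin d) (Fin d) ℝ) := Matrix.linftyOpNormedRing
    letI : NormedAlgebra ℝ (Matrix (Fin d) (Fin d) ℝ) := Matrix.linftyOpNormedAlgebra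
    letI : NormedAlgebra ℚ (Matrix (Fin d) (Fin d) ℝ) := Matrix.linftyOpNormedAlgebra
    have h1 : Continuous fun M : Matrix (Fin d) (Fin d) ℝ => (exp M).mulVec x :=
      exp_continuous.matrix_mulVec continuous_const
    have h2 : ContinuousOn (fun r : ℝ => Real.log r • B) (Ioi 0) :=
      (Real.continuousOn_log.mono (fun r hr => ne_of_gt hr)).smul continuousOn_const
    have hnorm : ContinuousOn
        (fun r : ℝ => ‖(NormedSpace.exp ((Real.log r) • B)).mulVec x‖) (Ioi 0) :=
      (h1.comp_continuousOn h2).norm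
    have hrpow : ContinuousOn
        (fun r : ℝ => ‖(NormedSpace.exp ((Real.log r) • B)).mulVec x‖ ^ p) (Ioi 0) :=
      hnorm.rpow_const (fun r _ => Or.inr hp0.le)
    exact hrpow.div continuousOn_id (fun r hr => ne_of_gt hr)
  -- integrability on Ioc 0 t
  have hgint : ∀ t : ℝ, 0 < t → IntegrableOn g (Ioc 0 t) := by
    obtain ⟨ε, hε, C, hC0, hC⟩ := decay_real B hspec x
    have base : IntegrableOn g (Ioc 0 1) := by
      have hmeas : AEStronglyMeasurable g (volume.restrict (Ioc (0:ℝ) 1)) :=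
        (hgcont.mono Ioc_subset_Ioi_self).aestronglyMeasurable measurableSet_Ioc
      have hint : IntegrableOn (fun r : ℝ => C ^ p * r ^ (ε * p - 1)) (Ioc 0 1) := by
        have h1 : IntervalIntegrable (fun r : ℝ => r ^ (ε * p - 1)) volume 0 1 :=
          intervalIntegral.intervalIntegrable_rpow' (by nlinarith)
        rw [intervalIntegrable_iff_integrableOn_Ioc_of_le zero_le_one] at h1
        exact h1.const_mul _
      refine hint.mono' hmeas ?_
      rw [ae_restrict_iff' measurableSet_Ioc]
      refine ae_of_all _ fun r hr => ?_
      have hr0 : 0 < r := hr.1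
      have hb := hC (Real.log r) (Real.log_nonpos hr0.le hr.2)
      rw [show Real.exp (ε * Real.log r) = r ^ ε by
        rw [Real.rpow_def_of_pos hr0, mul_comm]] at hb
      have h2 : ‖(NormedSpace.exp ((Real.log r) • B)).mulVec x‖ ^ p
          ≤ (C * r ^ ε) ^ p := Real.rpow_le_rpow (norm_nonneg _) hb (by positivity)
      have h3 : (C * r ^ ε) ^ p = C ^ p * r ^ (ε * p) := by
        rw [Real.mul_rpow hC0 (Real.rpow_nonneg hr0.le _), ← Real.rpow_mul hr0.le]
      have h4 : g r ≤ C ^ p * r ^ (ε * p - 1) := by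
        rw [hgdef]
        have := (div_le_div_iff_of_pos_right hr0).2 (h2.trans_eq h3)
        refine this.trans (le_of_eq ?_)
        rw [Real.rpow_sub hr0, Real.rpow_one, mul_div_assoc]
      have hgnn : 0 ≤ g r := le_of_lt (hgpos r hr0)
      rw [Real.norm_eq_abs, abs_of_nonneg hgnn]
      exact h4
    intro t ht
    rcases le_or_gt t 1 with h | h
    · exact base.mono_set (Ioc_subset_Ioc_right h)
    · have tail : IntegrableOn g (Ioc 1 t) := by
        have : ContinuousOn g (Icc 1 t) :=
          hgcont.mono (fun r hr => lt_of_lt_of_le one_pos hr.1)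
        exact (this.integrableOn_Icc).mono_set Ioc_subset_Icc_self
      rw [← Ioc_union_Ioc_eq_Ioc zero_le_one h.le]
      exact base.union tail
  -- value formula
  have hval : ∀ t : ℝ, 0 < t →
      normB B p ((NormedSpace.exp ((Real.log t) • B)).mulVec x)
        = (∫ r in Ioc 0 t, g r) ^ (1 / p) := by
    intro t ht
    rw [normB]
    congr 1
    have h5 : EqOn
        (fun s : ℝ =>
          ‖(NormedSpace.exp ((Real.log s) • B)).mulVec
            ((NormedSpace.exp ((Real.log t) • B)).mulVec x)‖ ^ p / s)
        (fun s : ℝ => g (s * t) * t) (Ioc 0 1) := by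
      intro s hs
      have hs0 : 0 < s := hs.1
      have hcomm : Commute (Real.log s • B) (Real.log t • B) :=
        ((Commute.refl B).smul_left _).smul_right _
      have hmul : (NormedSpace.exp (Real.log s • B))
            * (NormedSpace.exp (Real.log t • B))
          = NormedSpace.exp (Real.log (s * t) • B) := by
        rw [← Matrix.exp_add_of_commute _ _ hcomm, ← add_smul,
          ← Real.log_mul hs0.ne' ht.ne']
      simp only [hgdef]
      rw [Matrix.mulVec_mulVec, hmul]
      field_simp
    rw [setIntegral_congr_fun measurableSet_Ioc h5,
      ← intervalIntegral.integral_of_le zero_le_one]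
    rw [intervalIntegral.integral_mul_const,
      intervalIntegral.integral_comp_mul_right (fun r => g r) ht.ne']
    rw [zero_mul, one_mul, smul_eq_mul, intervalIntegral.integral_of_le ht.le]
    field_simp
  -- strict monotonicity
  intro a ha b hb hab
  have ha' : (0:ℝ) < a := ha
  have hb' : (0:ℝ) < b := hb
  simp only
  rw [hval a ha', hval b hb']
  have hsplit : ∫ r in Ioc 0 b, g r
      = (∫ r in Ioc 0 a, g r) + ∫ r in Ioc a b, g r := by
    rw [← Ioc_union_Ioc_eq_Ioc ha'.le hab.le,
      setIntegral_union (Ioc_disjoint_Ioc_of_le le_rfl) measurableSet_Ioc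
        ((hgint b hb').mono_set (Ioc_subset_Ioc_right hab.le))
        ((hgint b hb').mono_set (Ioc_subset_Ioc_left ha'.le))]
  have hpos2 : 0 < ∫ r in Ioc a b, g r := by
    rw [← intervalIntegral.integral_of_le hab.le]
    apply intervalIntegral.intervalIntegral_pos_of_pos_on
    · rw [intervalIntegrable_iff_integrableOn_Ioc_of_le hab.le]
      exact (hgint b hb').mono_set (Ioc_subset_Ioc_left ha'.le)
    · exact fun r hr => hgpos r (lt_trans ha' hr.1)
    · exact hab
  have hnn : 0 ≤ ∫ r in Ioc 0 a, g r :=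
    setIntegral_nonneg measurableSet_Ioc (fun r hr => (hgpos r hr.1).le)
  exact Real.rpow_lt_rpow hnn (by linarith) (by positivity)
end
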